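/- Let q and z be related by the Levi-Civita transformation q(t) = z(τ(t))² with time change dt/q(t) = dτ/‖z‖², where z ∈ H¹(S¹,ℝ) has finitely many zeros. Then ∫₀¹ q̇(t)² dt = 4·‖z‖²·‖z'‖², where ‖z‖² = ∫₀¹ z(τ)² dτ and ‖z'‖² = ∫₀¹ z'(τ)² dτ. -/
import Mathlib


open Set Real MeasureTheory intervalIntegral

/-- If q(t) = z(τ(t))² under the Levi-Civita time change
(τ the inverse of t_z(τ) = ‖z‖⁻²∫₀^τ z², i.e. ∫₀^{τ(t)} z² = ‖z‖²·t),
with z ∈ H¹(S¹,ℝ) (modelled as a 1-periodic function with derivative z')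
having finitely many zeros, then ∫₀¹ q̇(t)² dt = 4‖z‖²‖z'‖². -/
theorem levi_civita_kinetic (z z' τ q q' : ℝ → ℝ)
    (hper : Function.Periodic z 1)
    (hzderiv : ∀ s, HasDerivAt z (z' s) s)
    (hz'cont : Continuous z')
    (hfin : {s : ℝ | s ∈ Set.Ico (0:ℝ) 1 ∧ z s = 0}.Finite)
    (hτ0 : τ 0 = 0)
    (hτ : ∀ t, (∫ s in (0:ℝ)..τ t, (z s) ^ 2) = (∫ s in (0:ℝ)..1, (z s) ^ 2) * t)
    (hq : ∀ t, q t = (z (τ t)) ^ 2)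
    (hq' : ∀ t, q t ≠ 0 → HasDerivAt q (q' t) t) :
    ∫ t in Set.Ioo (0:ℝ) 1, (q' t) ^ 2 =
      4 * (∫ s in Set.Ioo (0:ℝ) 1, (z s) ^ 2) *
        (∫ s in Set.Ioo (0:ℝ) 1, (z' s) ^ 2) := by
  have hzc : Continuous z := by
    rw [continuous_iff_continuousAt]; exact fun s => (hzderiv s).continuousAt
  have hz2c : Continuous (fun s : ℝ => (z s) ^ 2) := hzc.pow 2
  set I : ℝ := ∫ s in (0:ℝ)..1, (z s) ^ 2 with hIdef
  set φ : ℝ → ℝ := fun x => ∫ s in (0:ℝ)..x, (z s) ^ 2 with hφdef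
  -- finitely many zeros on any bounded interval
  have Zfin : ∀ a b : ℝ, {s : ℝ | s ∈ Set.Ioo a b ∧ z s = 0}.Finite := by
    intro a b
    apply Set.Finite.subset (Set.Finite.biUnion (Set.finite_Icc ⌊a⌋ ⌊b⌋)
      (fun n _ => hfin.image (fun y => y + (n : ℝ))))
    rintro s ⟨⟨has, hsb⟩, hzs⟩
    have hmem : ⌊s⌋ ∈ Set.Icc ⌊a⌋ ⌊b⌋ :=
      ⟨Int.floor_le_floor has.le, Int.floor_le_floor hsb.le⟩
    refine Set.mem_biUnion hmem ?_
    refine ⟨Int.fract s, ⟨⟨Int.fract_nonneg s, Int.fract_lt_one s⟩, ?_⟩, ?_⟩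
    · have h1 : z (s - (⌊s⌋ : ℝ) * 1) = z s := hper.sub_int_mul_eq ⌊s⌋
      have : z (Int.fract s) = z s := by
        rw [Int.fract]; simpa using h1
      rw [this]; exact hzs
    · show Int.fract s + (⌊s⌋ : ℝ) = s
      exact Int.fract_add_floor s
  -- positivity of ∫ z² on any nontrivial interval
  have hint_pos : ∀ a b : ℝ, a < b → 0 < ∫ s in a..b, (z s) ^ 2 := by
    intro a b hab
    rw [intervalIntegral.integral_pos_iff_support_of_nonneg_ae
      (Filter.Eventually.of_forall (fun s => sq_nonneg (z s)))
      (hz2c.intervalIntegrable a b)]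
    refine ⟨hab, ?_⟩
    have h1 : Set.Ioo a b \ {s : ℝ | s ∈ Set.Ioo a b ∧ z s = 0} ⊆
        Function.support (fun s => (z s) ^ 2) ∩ Set.Ioc a b := by
      rintro s ⟨hs, hns⟩
      refine ⟨fun h => hns ⟨hs, by simpa using pow_eq_zero_iff (n := 2) (by norm_num) |>.mp h⟩,
        Set.Ioo_subset_Ioc_self hs⟩
    refine lt_of_lt_of_le ?_ (measure_mono h1)
    rw [measure_diff_null ((Zfin a b).measure_zero volume)]
    rw [Real.volume_Ioo]
    exact ENNReal.ofReal_pos.mpr (sub_pos.mpr hab)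
  have hIpos : 0 < I := hint_pos 0 1 one_pos
  have hφd : ∀ x, HasDerivAt φ ((z x) ^ 2) x := fun x =>
    intervalIntegral.integral_hasDerivAt_right (hz2c.intervalIntegrable (μ := volume) 0 x)
      (hz2c.stronglyMeasurableAtFilter volume (nhds x)) hz2c.continuousAt
  have hφmono : StrictMono φ := by
    intro a b hab
    have hadd := intervalIntegral.integral_add_adjacent_intervals (μ := volume)
      (hz2c.intervalIntegrable 0 a) (hz2c.intervalIntegrable a b)
    have hpos := hint_pos a b hab
    have : φ a + ∫ s in a..b, (z s) ^ 2 = φ b := hadd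
    linarith
  have hφτ : ∀ t, φ (τ t) = I * t := fun t => hτ t
  have hφ1 : φ 1 = I := rfl
  have hτmono : StrictMono τ := by
    intro a b hab
    by_contra h
    push_neg at h
    have h2 : φ (τ b) ≤ φ (τ a) := hφmono.monotone h
    rw [hφτ, hφτ] at h2
    nlinarith
  have hτ1 : τ 1 = 1 := by
    apply hφmono.injective
    rw [hφτ, hφ1, mul_one]
  have hτsurj : Function.Surjective τ := by
    intro x
    refine ⟨φ x / I, hφmono.injective ?_⟩
    rw [hφτ]
    field_simp
  have hτcont : Continuous τ := by
    have := (StrictMono.orderIsoOfSurjective τ hτmono hτsurj).continuous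
    simpa using this
  have hfτ : ∀ t, φ (τ t) / I = t := fun t => by
    rw [hφτ]; field_simp
  have hτf : ∀ s, τ (φ s / I) = s := fun s => by
    apply hφmono.injective
    rw [hφτ]
    field_simp
  have hτd : ∀ t, z (τ t) ≠ 0 → HasDerivAt τ (I / (z (τ t)) ^ 2) t := by
    intro t hne
    have hd : HasDerivAt (fun x => φ x / I) ((z (τ t)) ^ 2 / I) (τ t) :=
      (hφd (τ t)).div_const I
    have h0 : (z (τ t)) ^ 2 / I ≠ 0 := div_ne_zero (pow_ne_zero 2 hne) hIpos.ne'
    have h1 := HasDerivAt.of_local_left_inverse hτcont.continuousAt hd h0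
      (Filter.Eventually.of_forall hfτ)
    have h2 : ((z (τ t)) ^ 2 / I)⁻¹ = I / (z (τ t)) ^ 2 := by
      rw [inv_div]
    rwa [h2] at h1
  have hq'eq : ∀ t, z (τ t) ≠ 0 → q' t = 2 * I * z' (τ t) / z (τ t) := by
    intro t hne
    have hw : HasDerivAt (fun u => z (τ u)) (z' (τ t) * (I / (z (τ t)) ^ 2)) t :=
      (hzderiv (τ t)).comp t (hτd t hne)
    have hd2 := hw.pow 2
    have hq0 : q t ≠ 0 := by rw [hq t]; exact pow_ne_zero 2 hne
    have hdq : HasDerivAt q (q' t) t := hq' t hq0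
    have hqfun : q = fun u => (z (τ u)) ^ 2 := funext hq
    rw [hqfun] at hdq
    have huniq := hdq.unique hd2
    rw [huniq]
    have hI0 : I ≠ 0 := hIpos.ne'
    field_simp
    ring
  -- the good sets
  set U : Set ℝ := Set.Ioo (0:ℝ) 1 ∩ {s | z s ≠ 0} with hUdef
  set Good : Set ℝ := Set.Ioo (0:ℝ) 1 ∩ {t | z (τ t) ≠ 0} with hGooddef
  have hUopen : IsOpen U := isOpen_Ioo.inter (isOpen_ne_fun hzc continuous_const)
  have hGoodopen : IsOpen Good :=
    isOpen_Ioo.inter (isOpen_ne_fun (hzc.comp hτcont) continuous_const)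
  have hτmem : ∀ t ∈ Set.Ioo (0:ℝ) 1, τ t ∈ Set.Ioo (0:ℝ) 1 := by
    intro t ht
    exact ⟨by rw [← hτ0]; exact hτmono ht.1, by rw [← hτ1]; exact hτmono ht.2⟩
  have hφ0 : φ 0 = 0 := intervalIntegral.integral_same
  have himg : (fun s => φ s / I) '' U = Good := by
    ext t
    constructor
    · rintro ⟨s, ⟨hs, hzs⟩, rfl⟩
      have h1 : 0 < φ s := by
        have := hint_pos 0 s hs.1
        simpa [hφ0] using this
      have h2 : φ s < I := by
        have := hφmono hs.2
        rwa [hφ1] at this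
      refine ⟨⟨div_pos h1 hIpos, (div_lt_one hIpos).mpr h2⟩, ?_⟩
      show z (τ (φ s / I)) ≠ 0
      rw [hτf s]; exact hzs
    · rintro ⟨ht, hzt⟩
      exact ⟨τ t, ⟨hτmem t ht, hzt⟩, hfτ t⟩
  have hBfin : (Set.Ioo (0:ℝ) 1 \ Good).Finite := by
    have himg2 : τ '' (Set.Ioo (0:ℝ) 1 \ Good) ⊆ {s : ℝ | s ∈ Set.Ioo (0:ℝ) 1 ∧ z s = 0} := by
      rintro _ ⟨t, ⟨ht, hnot⟩, rfl⟩
      have hz0 : z (τ t) = 0 := by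
        by_contra h
        exact hnot ⟨ht, h⟩
      exact ⟨hτmem t ht, hz0⟩
    exact Set.Finite.of_finite_image ((Zfin 0 1).subset himg2) hτmono.injective.injOn
  have hGoodae : (Set.Ioo (0:ℝ) 1 : Set ℝ) =ᵐ[volume] Good := by
    rw [MeasureTheory.ae_eq_set]
    constructor
    · exact hBfin.measure_zero volume
    · rw [Set.diff_eq_empty.mpr Set.inter_subset_left]
      exact measure_empty
  have hUae : U =ᵐ[volume] (Set.Ioo (0:ℝ) 1 : Set ℝ) := by
    rw [MeasureTheory.ae_eq_set]
    constructor
    · rw [Set.diff_eq_empty.mpr Set.inter_subset_left]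
      exact measure_empty
    · refine Set.Finite.measure_zero ?_ volume
      refine (Zfin 0 1).subset ?_
      rintro s ⟨hs, hns⟩
      refine ⟨hs, ?_⟩
      by_contra h
      exact hns ⟨hs, h⟩
  -- change of variables
  have hU' : ∀ s ∈ U, HasDerivWithinAt (fun x => φ x / I) ((z s) ^ 2 / I) U s :=
    fun s _ => ((hφd s).div_const I).hasDerivWithinAt
  have hinj : Set.InjOn (fun x => φ x / I) U := by
    intro a _ b _ h
    apply hφmono.injective
    have hI0 : I ≠ 0 := hIpos.ne'
    field_simp at h
    exact h
  have key := MeasureTheory.integral_image_eq_integral_abs_deriv_smul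
      hUopen.measurableSet hU' hinj (fun t => (2 * I * z' (τ t) / z (τ t)) ^ 2)
  rw [himg] at key
  calc ∫ t in Set.Ioo (0:ℝ) 1, (q' t) ^ 2
      = ∫ t in Good, (q' t) ^ 2 := setIntegral_congr_set hGoodae
    _ = ∫ t in Good, (2 * I * z' (τ t) / z (τ t)) ^ 2 := by
        refine setIntegral_congr_fun hGoodopen.measurableSet (fun t ht => ?_)
        rw [hq'eq t ht.2]
    _ = ∫ s in U, |(z s) ^ 2 / I| • (2 * I * z' (τ (φ s / I)) / z (τ (φ s / I))) ^ 2 := key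
    _ = ∫ s in U, 4 * I * (z' s) ^ 2 := by
        refine setIntegral_congr_fun hUopen.measurableSet (fun s hs => ?_)
        have hzs : z s ≠ 0 := hs.2
        have hI0 : I ≠ 0 := hIpos.ne'
        rw [hτf s, smul_eq_mul, abs_of_nonneg (by positivity)]
        field_simp
        ring
    _ = ∫ s in Set.Ioo (0:ℝ) 1, 4 * I * (z' s) ^ 2 := setIntegral_congr_set hUae
    _ = 4 * I * ∫ s in Set.Ioo (0:ℝ) 1, (z' s) ^ 2 := by
        rw [MeasureTheory.integral_const_mul]
    _ = 4 * (∫ s in Set.Ioo (0:ℝ) 1, (z s) ^ 2) * (∫ s in Set.Ioo (0:ℝ) 1, (z' s) ^ 2) := by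
        have hIeq : I = ∫ s in Set.Ioo (0:ℝ) 1, (z s) ^ 2 := by
          rw [hIdef, intervalIntegral.integral_of_le zero_le_one,
            MeasureTheory.integral_Ioc_eq_integral_Ioo]
        rw [hIeq]
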